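/- Let u be a smooth function of z₁, z̄₁, z₂, z̄₂ and define the operators L₁ = λ(u_{1 2̄}D_{1̄} − u_{1 1̄}D_{2̄}) and L₂ = λ(u_{2 2̄}D_{1̄} − u_{2 1̄}D_{2̄}), where D_{1̄}, D_{2̄} are total derivative operators in z̄₁, z̄₂ and λ is a nonzero complex constant. Then the commutator satisfies [L₁, L₂] = λ²{ (u_{1 1̄}u_{2 2̄} − u_{1 2̄}u_{2 1̄})_{1̄} D_{2̄} − (u_{1 1̄}u_{2 2̄} − u_{1 2̄}u_{2 1̄})_{2̄} D_{1̄} }. In particular, if u satisfies the hyperbolic complex Monge–Ampère equation u_{1 1̄}u_{2 2̄} − u_{1 2̄}u_{2 1̄} = −1, then L₁ and L₂ commute. -/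

import Mathlib

noncomputable section

/-- Functions of the four independent complex variables (z₁, z̄₁, z₂, z̄₂). -/
abbrev F4 := ℂ → ℂ → ℂ → ℂ → ℂ

/-- Partial derivative in the 1st slot (z₁, resp. q). -/
def D1 (f : F4) : F4 := fun a b c d => deriv (fun t => f t b c d) a
/-- Partial derivative in the 2nd slot (z̄₁, resp. q̄). -/
def D2 (f : F4) : F4 := fun a b c d => deriv (fun t => f a t c d) b
/-- Partial derivative in the 3rd slot (z₂, resp. z). -/
def D3 (f : F4) : F4 := fun a b c d => deriv (fun t => f a b t d) c
/-- Partial derivative in the 4th slot (z̄₂, resp. z̄). -/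
def D4 (f : F4) : F4 := fun a b c d => deriv (fun t => f a b c t) d

/-- Smoothness of a function of the four complex variables. -/
def Sm (f : F4) : Prop :=
  ContDiff ℂ ⊤ (fun p : ℂ × ℂ × ℂ × ℂ => f p.1 p.2.1 p.2.2.1 p.2.2.2)

namespace Aux

def unc (f : F4) : ℂ × ℂ × ℂ × ℂ → ℂ := fun p => f p.1 p.2.1 p.2.2.1 p.2.2.2

lemma curve1 (a b c d : ℂ) : HasDerivAt (fun t : ℂ => ((t, b, c, d) : ℂ × ℂ × ℂ × ℂ)) (1,0,0,0) a :=
  (hasDerivAt_id a).prodMk (((hasDerivAt_const a b).prodMk ((hasDerivAt_const a c).prodMk (hasDerivAt_const a d))))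

lemma curve2 (a b c d : ℂ) : HasDerivAt (fun t : ℂ => ((a, t, c, d) : ℂ × ℂ × ℂ × ℂ)) (0,1,0,0) b :=
  (hasDerivAt_const b a).prodMk (((hasDerivAt_id b).prodMk ((hasDerivAt_const b c).prodMk (hasDerivAt_const b d))))

lemma curve3 (a b c d : ℂ) : HasDerivAt (fun t : ℂ => ((a, b, t, d) : ℂ × ℂ × ℂ × ℂ)) (0,0,1,0) c :=
  (hasDerivAt_const c a).prodMk (((hasDerivAt_const c b).prodMk ((hasDerivAt_id c).prodMk (hasDerivAt_const c d))))

lemma curve4 (a b c d : ℂ) : HasDerivAt (fun t : ℂ => ((a, b, c, t) : ℂ × ℂ × ℂ × ℂ)) (0,0,0,1) d :=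
  (hasDerivAt_const d a).prodMk (((hasDerivAt_const d b).prodMk ((hasDerivAt_const d c).prodMk (hasDerivAt_id d))))

lemma D1_eq {f : F4} (hf : Sm f) (a b c d : ℂ) :
    D1 f a b c d = fderiv ℂ (unc f) (a,b,c,d) (1,0,0,0) :=
  by have h := (((hf.differentiable (by simp)) (a,b,c,d)).hasFDerivAt : HasFDerivAt (unc f) _ _).comp_hasDerivAt a (curve1 a b c d); exact h.deriv

lemma D2_eq {f : F4} (hf : Sm f) (a b c d : ℂ) :
    D2 f a b c d = fderiv ℂ (unc f) (a,b,c,d) (0,1,0,0) :=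
  by have h := (((hf.differentiable (by simp)) (a,b,c,d)).hasFDerivAt : HasFDerivAt (unc f) _ _).comp_hasDerivAt b (curve2 a b c d); exact h.deriv

lemma D3_eq {f : F4} (hf : Sm f) (a b c d : ℂ) :
    D3 f a b c d = fderiv ℂ (unc f) (a,b,c,d) (0,0,1,0) :=
  by have h := (((hf.differentiable (by simp)) (a,b,c,d)).hasFDerivAt : HasFDerivAt (unc f) _ _).comp_hasDerivAt c (curve3 a b c d); exact h.deriv

lemma D4_eq {f : F4} (hf : Sm f) (a b c d : ℂ) :
    D4 f a b c d = fderiv ℂ (unc f) (a,b,c,d) (0,0,0,1) :=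
  by have h := (((hf.differentiable (by simp)) (a,b,c,d)).hasFDerivAt : HasFDerivAt (unc f) _ _).comp_hasDerivAt d (curve4 a b c d); exact h.deriv

lemma sm_fderiv_apply {f : F4} (hf : Sm f) (v : ℂ × ℂ × ℂ × ℂ) :
    ContDiff ℂ ⊤ (fun p => fderiv ℂ (unc f) p v) :=
  (hf.fderiv_right le_top).clm_apply contDiff_const

lemma sm_D1 {f : F4} (hf : Sm f) : Sm (D1 f) := by
  have : (fun p : ℂ × ℂ × ℂ × ℂ => D1 f p.1 p.2.1 p.2.2.1 p.2.2.2)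
      = fun p => fderiv ℂ (unc f) p (1,0,0,0) :=
    funext fun p => D1_eq hf p.1 p.2.1 p.2.2.1 p.2.2.2
  rw [Sm, this]; exact sm_fderiv_apply hf _

lemma sm_D2 {f : F4} (hf : Sm f) : Sm (D2 f) := by
  have : (fun p : ℂ × ℂ × ℂ × ℂ => D2 f p.1 p.2.1 p.2.2.1 p.2.2.2)
      = fun p => fderiv ℂ (unc f) p (0,1,0,0) :=
    funext fun p => D2_eq hf p.1 p.2.1 p.2.2.1 p.2.2.2
  rw [Sm, this]; exact sm_fderiv_apply hf _

lemma sm_D3 {f : F4} (hf : Sm f) : Sm (D3 f) := by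
  have : (fun p : ℂ × ℂ × ℂ × ℂ => D3 f p.1 p.2.1 p.2.2.1 p.2.2.2)
      = fun p => fderiv ℂ (unc f) p (0,0,1,0) :=
    funext fun p => D3_eq hf p.1 p.2.1 p.2.2.1 p.2.2.2
  rw [Sm, this]; exact sm_fderiv_apply hf _

lemma sm_D4 {f : F4} (hf : Sm f) : Sm (D4 f) := by
  have : (fun p : ℂ × ℂ × ℂ × ℂ => D4 f p.1 p.2.1 p.2.2.1 p.2.2.2)
      = fun p => fderiv ℂ (unc f) p (0,0,0,1) :=
    funext fun p => D4_eq hf p.1 p.2.1 p.2.2.1 p.2.2.2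
  rw [Sm, this]; exact sm_fderiv_apply hf _

lemma D2_D4_comm {f : F4} (hf : Sm f) (a b c d : ℂ) :
    D2 (D4 f) a b c d = D4 (D2 f) a b c d := by
  rw [D2_eq (sm_D4 hf), D4_eq (sm_D2 hf)]
  have h4 : unc (D4 f) = fun p => fderiv ℂ (unc f) p (0,0,0,1) :=
    funext fun p => D4_eq hf p.1 p.2.1 p.2.2.1 p.2.2.2
  have h2 : unc (D2 f) = fun p => fderiv ℂ (unc f) p (0,1,0,0) :=
    funext fun p => D2_eq hf p.1 p.2.1 p.2.2.1 p.2.2.2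
  have hdiff : DifferentiableAt ℂ (fderiv ℂ (unc f)) (a,b,c,d) :=
    ((hf.fderiv_right (m := ⊤) le_top).differentiable (by simp)) (a,b,c,d)
  have key : ∀ v : ℂ × ℂ × ℂ × ℂ, fderiv ℂ (fun p => fderiv ℂ (unc f) p v) (a,b,c,d)
      = ((ContinuousLinearMap.apply ℂ ℂ v).comp (fderiv ℂ (fderiv ℂ (unc f)) (a,b,c,d))) := by
    intro v
    exact (((ContinuousLinearMap.apply ℂ ℂ v).hasFDerivAt).comp (a,b,c,d) hdiff.hasFDerivAt).fderiv
  rw [h4, h2, key, key]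
  exact (hf.contDiffAt.isSymmSndFDerivAt le_top) (0,1,0,0) (0,0,0,1)

end Aux

namespace Aux

lemma dslot2 {f : F4} (hf : Sm f) (a b c d : ℂ) :
    DifferentiableAt ℂ (fun t => f a t c d) b := by
  have h := ((hf.differentiable (by simp)) (a,b,c,d))
  have h2 := h.comp b (((differentiableAt_const a).prodMk
    ((differentiableAt_id).prodMk ((differentiableAt_const c).prodMk (differentiableAt_const d))) :
    DifferentiableAt ℂ (fun t : ℂ => ((a, t, c, d) : ℂ × ℂ × ℂ × ℂ)) b))
  exact h2

lemma dslot4 {f : F4} (hf : Sm f) (a b c d : ℂ) :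
    DifferentiableAt ℂ (fun t => f a b c t) d := by
  have h := ((hf.differentiable (by simp)) (a,b,c,d))
  have h2 := h.comp d (((differentiableAt_const a).prodMk
    ((differentiableAt_const b).prodMk ((differentiableAt_const c).prodMk (differentiableAt_id))) :
    DifferentiableAt ℂ (fun t : ℂ => ((a, b, c, t) : ℂ × ℂ × ℂ × ℂ)) d))
  exact h2

lemma D2_form (lam : ℂ) (f g f' g' : F4) (hf : Sm f) (hg : Sm g) (hf' : Sm f') (hg' : Sm g')
    (a b c d : ℂ) :
    D2 (fun a b c d => lam * (f a b c d * g a b c d - f' a b c d * g' a b c d)) a b c d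
      = lam * ((D2 f a b c d * g a b c d + f a b c d * D2 g a b c d)
             - (D2 f' a b c d * g' a b c d + f' a b c d * D2 g' a b c d)) := by
  show deriv (fun t => lam * (f a t c d * g a t c d - f' a t c d * g' a t c d)) b = _
  rw [deriv_const_mul _ (((dslot2 hf a b c d).fun_mul (dslot2 hg a b c d)).fun_sub
      ((dslot2 hf' a b c d).fun_mul (dslot2 hg' a b c d))),
    deriv_fun_sub ((dslot2 hf a b c d).fun_mul (dslot2 hg a b c d))
      ((dslot2 hf' a b c d).fun_mul (dslot2 hg' a b c d)),
    deriv_fun_mul (dslot2 hf a b c d) (dslot2 hg a b c d),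
    deriv_fun_mul (dslot2 hf' a b c d) (dslot2 hg' a b c d)]
  rfl

lemma D4_form (lam : ℂ) (f g f' g' : F4) (hf : Sm f) (hg : Sm g) (hf' : Sm f') (hg' : Sm g')
    (a b c d : ℂ) :
    D4 (fun a b c d => lam * (f a b c d * g a b c d - f' a b c d * g' a b c d)) a b c d
      = lam * ((D4 f a b c d * g a b c d + f a b c d * D4 g a b c d)
             - (D4 f' a b c d * g' a b c d + f' a b c d * D4 g' a b c d)) := by
  show deriv (fun t => lam * (f a b c t * g a b c t - f' a b c t * g' a b c t)) d = _
  rw [deriv_const_mul _ (((dslot4 hf a b c d).fun_mul (dslot4 hg a b c d)).fun_sub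
      ((dslot4 hf' a b c d).fun_mul (dslot4 hg' a b c d))),
    deriv_fun_sub ((dslot4 hf a b c d).fun_mul (dslot4 hg a b c d))
      ((dslot4 hf' a b c d).fun_mul (dslot4 hg' a b c d)),
    deriv_fun_mul (dslot4 hf a b c d) (dslot4 hg a b c d),
    deriv_fun_mul (dslot4 hf' a b c d) (dslot4 hg' a b c d)]
  rfl

lemma D2_form' (f g f' g' : F4) (hf : Sm f) (hg : Sm g) (hf' : Sm f') (hg' : Sm g')
    (a b c d : ℂ) :
    D2 (fun a b c d => f a b c d * g a b c d - f' a b c d * g' a b c d) a b c d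
      = (D2 f a b c d * g a b c d + f a b c d * D2 g a b c d)
             - (D2 f' a b c d * g' a b c d + f' a b c d * D2 g' a b c d) := by
  show deriv (fun t => f a t c d * g a t c d - f' a t c d * g' a t c d) b = _
  rw [deriv_fun_sub ((dslot2 hf a b c d).fun_mul (dslot2 hg a b c d))
      ((dslot2 hf' a b c d).fun_mul (dslot2 hg' a b c d)),
    deriv_fun_mul (dslot2 hf a b c d) (dslot2 hg a b c d),
    deriv_fun_mul (dslot2 hf' a b c d) (dslot2 hg' a b c d)]
  rfl

lemma D4_form' (f g f' g' : F4) (hf : Sm f) (hg : Sm g) (hf' : Sm f') (hg' : Sm g')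
    (a b c d : ℂ) :
    D4 (fun a b c d => f a b c d * g a b c d - f' a b c d * g' a b c d) a b c d
      = (D4 f a b c d * g a b c d + f a b c d * D4 g a b c d)
             - (D4 f' a b c d * g' a b c d + f' a b c d * D4 g' a b c d) := by
  show deriv (fun t => f a b c t * g a b c t - f' a b c t * g' a b c t) d = _
  rw [deriv_fun_sub ((dslot4 hf a b c d).fun_mul (dslot4 hg a b c d))
      ((dslot4 hf' a b c d).fun_mul (dslot4 hg' a b c d)),
    deriv_fun_mul (dslot4 hf a b c d) (dslot4 hg a b c d),
    deriv_fun_mul (dslot4 hf' a b c d) (dslot4 hg' a b c d)]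
  rfl

end Aux


/-- The operator L₁ = λ(u_{1 2̄} D_{1̄} − u_{1 1̄} D_{2̄}). -/
def opL1 (lam : ℂ) (u : F4) (φ : F4) : F4 := fun a b c d =>
  lam * (D4 (D1 u) a b c d * D2 φ a b c d - D2 (D1 u) a b c d * D4 φ a b c d)

/-- The operator L₂ = λ(u_{2 2̄} D_{1̄} − u_{2 1̄} D_{2̄}). -/
def opL2 (lam : ℂ) (u : F4) (φ : F4) : F4 := fun a b c d =>
  lam * (D4 (D3 u) a b c d * D2 φ a b c d - D2 (D3 u) a b c d * D4 φ a b c d)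

/-- The Monge–Ampère determinant u_{1 1̄}u_{2 2̄} − u_{1 2̄}u_{2 1̄}. -/
def MAdet (u : F4) : F4 := fun a b c d =>
  D2 (D1 u) a b c d * D4 (D3 u) a b c d - D4 (D1 u) a b c d * D2 (D3 u) a b c d

/- STATEMENT 2: the commutator identity
[L₁, L₂] = λ²{ (MAdet u)_{1̄} D_{2̄} − (MAdet u)_{2̄} D_{1̄} }, and in particular
L₁, L₂ commute on solutions of the hyperbolic complex Monge–Ampère equation
MAdet u = −1. -/
theorem partner_operators_commutator
    (lam : ℂ) (hlam : lam ≠ 0) (u φ : F4) (hu : Sm u) (hφ : Sm φ) :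
    (∀ a b c d : ℂ,
      opL1 lam u (opL2 lam u φ) a b c d - opL2 lam u (opL1 lam u φ) a b c d =
        lam ^ 2 * (D2 (MAdet u) a b c d * D4 φ a b c d
                 - D4 (MAdet u) a b c d * D2 φ a b c d)) ∧
    ((∀ a b c d : ℂ, MAdet u a b c d = -1) →
      ∀ a b c d : ℂ,
        opL1 lam u (opL2 lam u φ) a b c d = opL2 lam u (opL1 lam u φ) a b c d) := by
  have hu1 := Aux.sm_D1 hu
  have hu3 := Aux.sm_D3 hu
  have h41 := Aux.sm_D4 hu1
  have h21 := Aux.sm_D2 hu1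
  have h43 := Aux.sm_D4 hu3
  have h23 := Aux.sm_D2 hu3
  have hφ2 := Aux.sm_D2 hφ
  have hφ4 := Aux.sm_D4 hφ
  have main : ∀ a b c d : ℂ,
      opL1 lam u (opL2 lam u φ) a b c d - opL2 lam u (opL1 lam u φ) a b c d =
        lam ^ 2 * (D2 (MAdet u) a b c d * D4 φ a b c d
                 - D4 (MAdet u) a b c d * D2 φ a b c d) := by
    intro a b c d
    have e1 : D2 (opL2 lam u φ) a b c d = _ :=
      Aux.D2_form lam (D4 (D3 u)) (D2 φ) (D2 (D3 u)) (D4 φ) h43 hφ2 h23 hφ4 a b c d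
    have e2 : D4 (opL2 lam u φ) a b c d = _ :=
      Aux.D4_form lam (D4 (D3 u)) (D2 φ) (D2 (D3 u)) (D4 φ) h43 hφ2 h23 hφ4 a b c d
    have e3 : D2 (opL1 lam u φ) a b c d = _ :=
      Aux.D2_form lam (D4 (D1 u)) (D2 φ) (D2 (D1 u)) (D4 φ) h41 hφ2 h21 hφ4 a b c d
    have e4 : D4 (opL1 lam u φ) a b c d = _ :=
      Aux.D4_form lam (D4 (D1 u)) (D2 φ) (D2 (D1 u)) (D4 φ) h41 hφ2 h21 hφ4 a b c d
    have e5 : D2 (MAdet u) a b c d = _ :=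
      Aux.D2_form' (D2 (D1 u)) (D4 (D3 u)) (D4 (D1 u)) (D2 (D3 u)) h21 h43 h41 h23 a b c d
    have e6 : D4 (MAdet u) a b c d = _ :=
      Aux.D4_form' (D2 (D1 u)) (D4 (D3 u)) (D4 (D1 u)) (D2 (D3 u)) h21 h43 h41 h23 a b c d
    simp only [opL1, opL2]
    rw [e1, e2, e3, e4, e5, e6,
      Aux.D2_D4_comm hu3 a b c d, Aux.D2_D4_comm hu1 a b c d, Aux.D2_D4_comm hφ a b c d]
    ring
  refine ⟨main, fun hMA a b c d => ?_⟩
  have hconst : MAdet u = fun _ _ _ _ => (-1 : ℂ) :=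
    funext fun a => funext fun b => funext fun c => funext fun d => hMA a b c d
  have h2 : D2 (MAdet u) a b c d = 0 := by
    rw [hconst]; exact deriv_const b (-1)
  have h4 : D4 (MAdet u) a b c d = 0 := by
    rw [hconst]; exact deriv_const d (-1)
  have := main a b c d
  rw [h2, h4] at this
  simp only [zero_mul, mul_zero, sub_zero, mul_zero, sub_self] at this
  exact sub_eq_zero.mp this
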